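/- The supremum over θ ∈ ℝ of |sin 2θ| + |(1+cos 2θ+2cos θ)/4| + |(1+cos 2θ-2cos θ)/4| + |(1-cos 2θ+2sin θ)/4| + |(1-cos 2θ-2sin θ)/4| equals 1 + √2. -/

import Mathlib

open Real

lemma key_ub (c s : ℝ) (h : c ^ 2 + s ^ 2 = 1) :
    |2 * s * c| + |(1 + (2 * c ^ 2 - 1) + 2 * c) / 4|
      + |(1 + (2 * c ^ 2 - 1) - 2 * c) / 4|
      + |(1 - (2 * c ^ 2 - 1) + 2 * s) / 4|
      + |(1 - (2 * c ^ 2 - 1) - 2 * s) / 4| ≤ 1 + Real.sqrt 2 := by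
  have hc2 : c ^ 2 ≤ 1 := by nlinarith [sq_nonneg s]
  have hs2 : s ^ 2 ≤ 1 := by nlinarith [sq_nonneg c]
  have hc : |c| ≤ 1 := abs_le.mpr ⟨by nlinarith, by nlinarith⟩
  have hs : |s| ≤ 1 := abs_le.mpr ⟨by nlinarith, by nlinarith⟩
  have hc1 : -1 ≤ c := (abs_le.mp hc).1
  have hc1' : c ≤ 1 := (abs_le.mp hc).2
  have hs1 : -1 ≤ s := (abs_le.mp hs).1
  have hs1' : s ≤ 1 := (abs_le.mp hs).2
  have t1 : |2 * s * c| = 2 * (|s| * |c|) := by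
    rw [abs_mul, abs_mul, abs_two]; ring
  have t2 : |(1 + (2 * c ^ 2 - 1) + 2 * c) / 4| = |c| * (1 + c) / 2 := by
    have e : (1 + (2 * c ^ 2 - 1) + 2 * c) / 4 = c * (c + 1) / 2 := by ring
    rw [e, abs_div, abs_mul, abs_of_nonneg (by linarith : (0:ℝ) ≤ c + 1)]
    norm_num; left; ring
  have t3 : |(1 + (2 * c ^ 2 - 1) - 2 * c) / 4| = |c| * (1 - c) / 2 := by
    have e : (1 + (2 * c ^ 2 - 1) - 2 * c) / 4 = c * (c - 1) / 2 := by ring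
    rw [e, abs_div, abs_mul, abs_of_nonpos (by linarith : c - 1 ≤ 0)]
    norm_num
  have t4 : |(1 - (2 * c ^ 2 - 1) + 2 * s) / 4| = |s| * (1 + s) / 2 := by
    have e : (1 - (2 * c ^ 2 - 1) + 2 * s) / 4 = s * (s + 1) / 2 := by
      field_simp; nlinarith
    rw [e, abs_div, abs_mul, abs_of_nonneg (by linarith : (0:ℝ) ≤ s + 1)]
    norm_num; left; ring
  have t5 : |(1 - (2 * c ^ 2 - 1) - 2 * s) / 4| = |s| * (1 - s) / 2 := by
    have e : (1 - (2 * c ^ 2 - 1) - 2 * s) / 4 = s * (s - 1) / 2 := by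
      field_simp; nlinarith
    rw [e, abs_div, abs_mul, abs_of_nonpos (by linarith : s - 1 ≤ 0)]
    norm_num
  rw [t1, t2, t3, t4, t5]
  have hsq : s ^ 2 = |s| ^ 2 := (sq_abs s).symm
  have hcq : c ^ 2 = |c| ^ 2 := (sq_abs c).symm
  have h2ab : 2 * (|s| * |c|) ≤ 1 := by nlinarith [sq_nonneg (|s| - |c|)]
  have hab : |c| + |s| ≤ Real.sqrt 2 := by
    have e : |c| + |s| = Real.sqrt ((|c| + |s|) ^ 2) :=
      (Real.sqrt_sq (by positivity)).symm
    rw [e]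
    exact Real.sqrt_le_sqrt (by nlinarith [sq_nonneg (|s| - |c|)])
  have hfinal : |c| * (1 + c) / 2 + |c| * (1 - c) / 2 = |c| := by ring
  have hfinal' : |s| * (1 + s) / 2 + |s| * (1 - s) / 2 = |s| := by ring
  linarith

/-- the supremum over θ of
`|sin 2θ| + |(1+cos 2θ+2cos θ)/4| + |(1+cos 2θ-2cos θ)/4|
  + |(1-cos 2θ+2sin θ)/4| + |(1-cos 2θ-2sin θ)/4|` equals `1 + √2`. -/
theorem stmt14 :
    IsLUB (Set.range fun θ : ℝ =>
      |Real.sin (2 * θ)|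
      + |(1 + Real.cos (2 * θ) + 2 * Real.cos θ) / 4|
      + |(1 + Real.cos (2 * θ) - 2 * Real.cos θ) / 4|
      + |(1 - Real.cos (2 * θ) + 2 * Real.sin θ) / 4|
      + |(1 - Real.cos (2 * θ) - 2 * Real.sin θ) / 4|) (1 + Real.sqrt 2) := by
  constructor
  · rintro x ⟨θ, rfl⟩
    simp only [Real.sin_two_mul, Real.cos_two_mul]
    exact key_ub (Real.cos θ) (Real.sin θ) (by
      have := Real.sin_sq_add_cos_sq θ; linarith)
  · intro b hb
    have := hb ⟨Real.pi / 4, rfl⟩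
    dsimp only at this
    have h2 : Real.sqrt 2 ^ 2 = 2 := Real.sq_sqrt (by norm_num)
    have h1 : (1 : ℝ) ≤ Real.sqrt 2 := by nlinarith [Real.sqrt_nonneg 2]
    have hc : Real.cos (Real.pi / 4) = Real.sqrt 2 / 2 := Real.cos_pi_div_four
    have hs : Real.sin (Real.pi / 4) = Real.sqrt 2 / 2 := Real.sin_pi_div_four
    have h2θ : 2 * (Real.pi / 4) = Real.pi / 2 := by ring
    rw [h2θ, Real.sin_pi_div_two, Real.cos_pi_div_two, hc, hs] at this
    have ha : |(1 : ℝ)| = 1 := abs_one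
    have e1 : |(1 + 0 + 2 * (Real.sqrt 2 / 2)) / 4| = (1 + Real.sqrt 2) / 4 := by
      rw [abs_of_nonneg] <;> nlinarith
    have e2 : |(1 + 0 - 2 * (Real.sqrt 2 / 2)) / 4| = (Real.sqrt 2 - 1) / 4 := by
      rw [abs_of_nonpos] <;> nlinarith
    have e3 : |(1 - 0 + 2 * (Real.sqrt 2 / 2)) / 4| = (1 + Real.sqrt 2) / 4 := by
      rw [abs_of_nonneg] <;> nlinarith
    have e4 : |(1 - 0 - 2 * (Real.sqrt 2 / 2)) / 4| = (Real.sqrt 2 - 1) / 4 := by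
      rw [abs_of_nonpos] <;> nlinarith
    rw [ha, e1, e2, e3, e4] at this
    linarith
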